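/- (Burgunder splitting of a left-nested Lie monomial.) Let K be a commutative ring which is a ℚ-algebra, n ≥ 2, and work in A := FreeAlgebra K (Fin n) with generators X_1,…,X_n. Let M := [X_1,X_2,…,X_n]_L = ⁅X_1,⁅X_2,…,⁅X_{n−1},X_n⁆…⁆⁆ ∈ A. Then in A ⊗_K A: ∑_{k=1}^{n} X_k ⊗ 𝔇^L(∂^L_k(M)) = (n−1) • (X_1 ⊗ [X_2,…,X_n]_L) + ∑_{k=2}^{n−1} X_k ⊗ ⁅[X_1,…,X_{k−1}]_R, [X_{k+1},…,X_n]_L⁆ − X_n ⊗ [X_1,…,X_{n−1}]_R. -/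

import Mathlib

open scoped TensorProduct

attribute [local instance 100] LieRing.ofAssociativeRing

/-- Left-iterated Lie bracket `[Z₁, …, Z_p]_L` (equal to `Z₁` for a singleton list, `0` for
the empty list). -/
def bracketL {L : Type*} [LieRing L] : List L → L
  | [] => 0
  | [z] => z
  | z :: w :: ws => ⁅z, bracketL (w :: ws)⁆

/-- Right-iterated Lie bracket `[Z₁, …, Z_p]_R` (equal to `Z₁` for a singleton list, `0` for
the empty list). -/
def bracketR {L : Type*} [LieRing L] : List L → L
  | [] => 0
  | z :: zs => zs.foldl (fun acc u => ⁅acc, u⁆) z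

/-- The word `X_{λ₁} ⋯ X_{λ_p}` given by a list of letters. -/
def word (K : Type*) [CommRing K] {Λ : Type*} (ℓ : List Λ) : FreeAlgebra K Λ :=
  (ℓ.map (FreeAlgebra.ι K)).prod

/-- `𝔇^L`, the `K`-linear map with `𝔇^L(X_{λ₁} ⋯ X_{λ_p}) = [X_{λ₁}, …, X_{λ_p}]_L` and
`𝔇^L(1) = 0`. -/
noncomputable def DynL (K : Type*) [CommRing K] (Λ : Type*) :
    FreeAlgebra K Λ →ₗ[K] FreeAlgebra K Λ :=
  (FreeAlgebra.basisFreeMonoid K Λ).constr K fun w =>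
    bracketL (w.toList.map (FreeAlgebra.ι K))

/-- `∂^L_μ`, the `K`-linear map sending a word starting with `μ` to the word with the first
letter removed, and all other words (and `1`) to `0`. -/
noncomputable def partialL (K : Type*) [CommRing K] {Λ : Type*} [DecidableEq Λ] (μ : Λ) :
    FreeAlgebra K Λ →ₗ[K] FreeAlgebra K Λ :=
  (FreeAlgebra.basisFreeMonoid K Λ).constr K fun w =>
    if w.toList.head? = some μ then word K w.toList.tail else 0

namespace Burg

variable (K : Type*) [CommRing K] {Λ : Type*}

lemma word_nil : word K ([] : List Λ) = 1 := rfl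

lemma word_cons (a : Λ) (ℓ : List Λ) :
    word K (a :: ℓ) = FreeAlgebra.ι K a * word K ℓ := by simp [word]

lemma word_singleton (a : Λ) : word K [a] = FreeAlgebra.ι K a := by simp [word]

lemma word_append (l₁ l₂ : List Λ) : word K (l₁ ++ l₂) = word K l₁ * word K l₂ := by
  simp [word]

lemma basis_apply (w : FreeMonoid Λ) :
    FreeAlgebra.basisFreeMonoid K Λ w = word K w.toList := by
  simp only [FreeAlgebra.basisFreeMonoid, FreeAlgebra.equivMonoidAlgebraFreeMonoid,
    Module.Basis.map_apply, Finsupp.coe_basisSingleOne, AlgEquiv.toLinearEquiv_apply,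
    AlgEquiv.ofAlgHom_symm_apply]
  erw [MonoidAlgebra.lift_single]
  simp [FreeMonoid.lift_apply, word]

lemma basis_ofList (ℓ : List Λ) :
    FreeAlgebra.basisFreeMonoid K Λ (FreeMonoid.ofList ℓ) = word K ℓ := by
  rw [basis_apply, FreeMonoid.toList_ofList]

noncomputable def eps : FreeAlgebra K Λ →ₐ[K] K := FreeAlgebra.lift K 0

lemma eps_ι (a : Λ) : eps K (FreeAlgebra.ι K a) = 0 := by simp [eps]

lemma eps_word_ne (ℓ : List Λ) (h : ℓ ≠ []) : eps K (word K ℓ) = 0 := by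
  cases ℓ with
  | nil => exact absurd rfl h
  | cons a t => simp [word_cons, eps_ι]

lemma lie_ksmul (c : K) (x y : FreeAlgebra K Λ) : ⁅x, c • y⁆ = c • ⁅x, y⁆ := by
  rw [Ring.lie_def, Ring.lie_def, mul_smul_comm, smul_mul_assoc, smul_sub]

lemma eps_lie (u v : FreeAlgebra K Λ) : eps K ⁅u, v⁆ = 0 := by
  rw [Ring.lie_def]
  simp [mul_comm]

lemma DynL_word (ℓ : List Λ) :
    DynL K Λ (word K ℓ) = bracketL (ℓ.map (FreeAlgebra.ι K)) := by
  rw [← basis_ofList, DynL, Module.Basis.constr_basis, FreeMonoid.toList_ofList]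

lemma DynL_one : DynL K Λ (1 : FreeAlgebra K Λ) = 0 := by
  have := DynL_word K ([] : List Λ)
  rwa [word_nil] at this

lemma DynL_ι (a : Λ) : DynL K Λ (FreeAlgebra.ι K a) = FreeAlgebra.ι K a := by
  have := DynL_word K [a]
  rwa [word_singleton] at this

variable [DecidableEq Λ]

lemma partialL_word (μ : Λ) (ℓ : List Λ) :
    partialL K μ (word K ℓ) = if ℓ.head? = some μ then word K ℓ.tail else 0 := by
  rw [← basis_ofList, partialL, Module.Basis.constr_basis, FreeMonoid.toList_ofList]

lemma partialL_one (μ : Λ) : partialL K μ (1 : FreeAlgebra K Λ) = 0 := by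
  have := partialL_word K μ ([] : List Λ)
  rwa [word_nil, if_neg (by simp)] at this

omit [DecidableEq Λ] in
lemma ext_basis {M : Type*} [AddCommGroup M] [Module K M]
    {f g : FreeAlgebra K Λ →ₗ[K] M}
    (h : ∀ ℓ : List Λ, f (word K ℓ) = g (word K ℓ)) : f = g := by
  apply Module.Basis.ext (FreeAlgebra.basisFreeMonoid K Λ)
  intro w
  rw [basis_apply]
  exact h _


lemma partialL_ι_mul (μ a : Λ) (x : FreeAlgebra K Λ) :
    partialL K μ (FreeAlgebra.ι K a * x) = if a = μ then x else 0 := by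
  by_cases hm : a = μ
  · subst hm
    have h : (partialL K a).comp (LinearMap.mulLeft K (FreeAlgebra.ι K a)) = LinearMap.id := by
      apply ext_basis
      intro ℓ
      simp only [LinearMap.comp_apply, LinearMap.mulLeft_apply, LinearMap.id_apply]
      rw [← word_cons, partialL_word]
      simp
    have := LinearMap.congr_fun h x
    simpa using this
  · rw [if_neg hm]
    have h : (partialL K μ).comp (LinearMap.mulLeft K (FreeAlgebra.ι K a)) = 0 := by
      apply ext_basis
      intro ℓ
      simp only [LinearMap.comp_apply, LinearMap.mulLeft_apply, LinearMap.zero_apply]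
      rw [← word_cons, partialL_word]
      simp [hm]
    have := LinearMap.congr_fun h x
    simpa using this

lemma partialL_mul_ι (μ a : Λ) (x : FreeAlgebra K Λ) :
    partialL K μ (x * FreeAlgebra.ι K a) =
      partialL K μ x * FreeAlgebra.ι K a
        + eps K x • (if a = μ then (1 : FreeAlgebra K Λ) else 0) := by
  have h : (partialL K μ).comp (LinearMap.mulRight K (FreeAlgebra.ι K a)) =
      (LinearMap.mulRight K (FreeAlgebra.ι K a)).comp (partialL K μ)
        + (eps K (Λ := Λ)).toLinearMap.smulRight (if a = μ then (1 : FreeAlgebra K Λ) else 0) := by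
    apply ext_basis
    intro ℓ
    simp only [LinearMap.comp_apply, LinearMap.mulRight_apply, LinearMap.add_apply,
      LinearMap.smulRight_apply, AlgHom.toLinearMap_apply]
    cases ℓ with
    | nil =>
      rw [word_nil, partialL_one, one_mul, ← word_singleton, partialL_word]
      simp [word_nil]
    | cons b t =>
      rw [show FreeAlgebra.ι K a = word K [a] from (word_singleton K a).symm, ← word_append,
        partialL_word, partialL_word, eps_word_ne K _ (by simp)]
      simp only [List.cons_append, List.head?_cons, List.tail_cons, zero_smul, add_zero]
      by_cases hb : b = μ
      · simp [hb, word_append, word_singleton]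
      · simp [hb]
  have := LinearMap.congr_fun h x
  simpa using this

omit [DecidableEq Λ] in
lemma DynL_ι_mul (a : Λ) (x : FreeAlgebra K Λ) :
    DynL K Λ (FreeAlgebra.ι K a * x) =
      ⁅FreeAlgebra.ι K a, DynL K Λ x⁆ + eps K x • FreeAlgebra.ι K a := by
  have h : (DynL K Λ).comp (LinearMap.mulLeft K (FreeAlgebra.ι K a)) =
      (LinearMap.mulLeft K (FreeAlgebra.ι K a) - LinearMap.mulRight K (FreeAlgebra.ι K a)).comp
          (DynL K Λ)
        + (eps K (Λ := Λ)).toLinearMap.smulRight (FreeAlgebra.ι K a) := by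
    apply ext_basis
    intro ℓ
    simp only [LinearMap.comp_apply, LinearMap.mulLeft_apply, LinearMap.add_apply,
      LinearMap.sub_apply, LinearMap.mulRight_apply, LinearMap.smulRight_apply,
      AlgHom.toLinearMap_apply]
    cases ℓ with
    | nil =>
      simp [word_nil, DynL_one, DynL_ι]
    | cons b t =>
      rw [← word_cons, DynL_word, DynL_word, eps_word_ne K _ (by simp)]
      simp only [List.map_cons, zero_smul, add_zero]
      rw [show bracketL (FreeAlgebra.ι K a :: FreeAlgebra.ι K b :: t.map (FreeAlgebra.ι K))
            = ⁅FreeAlgebra.ι K a, bracketL (FreeAlgebra.ι K b :: t.map (FreeAlgebra.ι K))⁆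
          from rfl, Ring.lie_def]
  have := LinearMap.congr_fun h x
  simpa [Ring.lie_def, sub_mul, mul_sub] using this

section Good
omit [DecidableEq Λ]

def IsGood (u : FreeAlgebra K Λ) : Prop :=
  eps K u = 0 ∧ ∀ x, DynL K Λ (u * x) = ⁅u, DynL K Λ x⁆ + eps K x • DynL K Λ u

lemma isGood_ι (a : Λ) : IsGood K (FreeAlgebra.ι K a) :=
  ⟨eps_ι K a, fun x => by rw [DynL_ι_mul, DynL_ι]⟩

lemma isGood_lie {u v : FreeAlgebra K Λ} (hu : IsGood K u) (hv : IsGood K v) :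
    IsGood K ⁅u, v⁆ := by
  obtain ⟨hu0, hum⟩ := hu
  obtain ⟨hv0, hvm⟩ := hv
  have hD : DynL K Λ ⁅u, v⁆ = ⁅u, DynL K Λ v⁆ - ⁅v, DynL K Λ u⁆ := by
    rw [Ring.lie_def, map_sub, hum v, hvm u, hu0, hv0, zero_smul, zero_smul, add_zero, add_zero]
  refine ⟨eps_lie K u v, fun x => ?_⟩
  have e1 : DynL K Λ (u * (v * x)) = ⁅u, DynL K Λ (v * x)⁆ := by
    rw [hum (v * x), map_mul (eps K) v x, hv0, zero_mul, zero_smul, add_zero]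
  have e2 : DynL K Λ (v * (u * x)) = ⁅v, DynL K Λ (u * x)⁆ := by
    rw [hvm (u * x), map_mul (eps K) u x, hu0, zero_mul, zero_smul, add_zero]
  have harg : (⁅u, v⁆ : FreeAlgebra K Λ) * x = u * (v * x) - v * (u * x) := by
    rw [Ring.lie_def]; noncomm_ring
  rw [harg, map_sub, e1, e2, hum x, hvm x, lie_add, lie_add, lie_ksmul, lie_ksmul, hD,
    lie_lie, smul_sub]
  abel

lemma isGood_bracketL (ℓ : List Λ) (h : ℓ ≠ []) :
    IsGood K (bracketL (ℓ.map (FreeAlgebra.ι K))) := by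
  induction ℓ with
  | nil => exact absurd rfl h
  | cons a t ih =>
    cases t with
    | nil => simpa [bracketL] using isGood_ι K a
    | cons b s =>
      have : bracketL ((a :: b :: s).map (FreeAlgebra.ι K))
          = ⁅FreeAlgebra.ι K a, bracketL ((b :: s).map (FreeAlgebra.ι K))⁆ := rfl
      rw [this]
      exact isGood_lie K (isGood_ι K a) (ih (by simp))

lemma eps_bracketL (ℓ : List Λ) (h : ℓ ≠ []) :
    eps K (bracketL (ℓ.map (FreeAlgebra.ι K))) = 0 :=
  (isGood_bracketL K ℓ h).1

lemma DynL_good_mul {u : FreeAlgebra K Λ} (hu : IsGood K u) (x : FreeAlgebra K Λ) :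
    DynL K Λ (u * x) = ⁅u, DynL K Λ x⁆ + eps K x • DynL K Λ u := hu.2 x

lemma lie_nsmul' {L : Type*} [LieRing L] (x y : L) (m : ℕ) : ⁅x, m • y⁆ = m • ⁅x, y⁆ := by
  induction m with
  | zero => simp
  | succ k ihm => rw [succ_nsmul, succ_nsmul, lie_add, ihm]

lemma DSW (ℓ : List Λ) :
    DynL K Λ (bracketL (ℓ.map (FreeAlgebra.ι K)))
      = ℓ.length • bracketL (ℓ.map (FreeAlgebra.ι K)) := by
  induction ℓ with
  | nil => simp [bracketL]
  | cons a t ih =>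
    cases t with
    | nil => simp [bracketL, DynL_ι]
    | cons b s =>
      have hrfl : bracketL ((a :: b :: s).map (FreeAlgebra.ι K))
          = ⁅FreeAlgebra.ι K a, bracketL ((b :: s).map (FreeAlgebra.ι K))⁆ := rfl
      have hN := isGood_bracketL K (b :: s) (by simp)
      set N := bracketL ((b :: s).map (FreeAlgebra.ι K)) with hNdef
      have hN0 : eps K N = 0 := hN.1
      have e1 : DynL K Λ (FreeAlgebra.ι K a * N) = ⁅FreeAlgebra.ι K a, DynL K Λ N⁆ := by
        rw [(isGood_ι K a).2 N, hN0, zero_smul, add_zero]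
      have e2 : DynL K Λ (N * FreeAlgebra.ι K a) = ⁅N, FreeAlgebra.ι K a⁆ := by
        rw [hN.2 _, eps_ι, zero_smul, add_zero, DynL_ι]
      have h1 : ⁅FreeAlgebra.ι K a, (b :: s).length • N⁆
          = (b :: s).length • ⁅FreeAlgebra.ι K a, N⁆ := lie_nsmul' _ _ _
      calc DynL K Λ (bracketL ((a :: b :: s).map (FreeAlgebra.ι K)))
          = DynL K Λ (FreeAlgebra.ι K a * N) - DynL K Λ (N * FreeAlgebra.ι K a) := by
            rw [hrfl, Ring.lie_def, map_sub]
        _ = ⁅FreeAlgebra.ι K a, DynL K Λ N⁆ - ⁅N, FreeAlgebra.ι K a⁆ := by rw [e1, e2]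
        _ = ⁅FreeAlgebra.ι K a, (b :: s).length • N⁆ + ⁅FreeAlgebra.ι K a, N⁆ := by
            rw [ih, ← lie_skew N (FreeAlgebra.ι K a), sub_neg_eq_add]
        _ = (b :: s).length • ⁅FreeAlgebra.ι K a, N⁆ + ⁅FreeAlgebra.ι K a, N⁆ := by rw [h1]
        _ = (a :: b :: s).length • bracketL ((a :: b :: s).map (FreeAlgebra.ι K)) := by
            rw [hrfl, show (a :: b :: s).length = (b :: s).length + 1 from rfl, succ_nsmul]

end Good

lemma bracketR_concat {L : Type*} [LieRing L] (l : List L) (u : L) (h : l ≠ []) :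
    bracketR (l ++ [u]) = ⁅bracketR l, u⁆ := by
  cases l with
  | nil => exact absurd rfl h
  | cons x xs => simp [bracketR, List.foldl_append]

lemma bracketR_reverse {L : Type*} [LieRing L] (zs : List L) :
    bracketR zs.reverse = ((-1 : ℤ) ^ (zs.length + 1)) • bracketL zs := by
  induction zs with
  | nil => simp [bracketR, bracketL]
  | cons z t ih =>
    cases t with
    | nil => simp [bracketR, bracketL]
    | cons w ws =>
      have h1 : (z :: w :: ws).reverse = (w :: ws).reverse ++ [z] := by simp
      have hb : bracketL (z :: w :: ws) = ⁅z, bracketL (w :: ws)⁆ := rfl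
      rw [h1, bracketR_concat _ _ (by simp), ih, smul_lie, hb,
        show (z :: w :: ws).length + 1 = ((w :: ws).length + 1) + 1 from rfl,
        show ((-1:ℤ)) ^ (((w :: ws).length + 1) + 1) = -(-1) ^ ((w :: ws).length + 1) by ring,
        neg_smul, ← smul_neg, lie_skew]

lemma bracketL_reverse {L : Type*} [LieRing L] (zs : List L) :
    bracketL zs.reverse = ((-1 : ℤ) ^ (zs.length + 1)) • bracketR zs := by
  have h := bracketR_reverse zs.reverse
  rw [List.reverse_reverse, List.length_reverse] at h
  rw [h, smul_smul, ← pow_add]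
  have : Even (zs.length + 1 + (zs.length + 1)) := ⟨zs.length + 1, by ring⟩
  rw [this.neg_one_pow, one_smul]

lemma partialL_not_mem (μ : Λ) (ℓ : List Λ) (h : μ ∉ ℓ) :
    partialL K μ (bracketL (ℓ.map (FreeAlgebra.ι K))) = 0 := by
  induction ℓ with
  | nil => rw [show bracketL ((List.map (FreeAlgebra.ι K) [])) = 0 from rfl, map_zero]
  | cons a t ih =>
    have hne : ¬ a = μ := fun hm => h (by rw [← hm]; exact List.mem_cons_self)
    cases t with
    | nil =>
      rw [show bracketL ([a].map (FreeAlgebra.ι K)) = FreeAlgebra.ι K a from rfl,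
        ← word_singleton, partialL_word]
      simp [hne]
    | cons b s =>
      have hrfl : bracketL ((a :: b :: s).map (FreeAlgebra.ι K))
          = ⁅FreeAlgebra.ι K a, bracketL ((b :: s).map (FreeAlgebra.ι K))⁆ := rfl
      rw [hrfl, Ring.lie_def, map_sub, partialL_ι_mul, partialL_mul_ι,
        ih (fun hm => h (List.mem_cons_of_mem a hm)), eps_bracketL K _ (by simp)]
      simp [hne]

lemma partialL_bracketL (ℓ : List Λ) (hnd : ℓ.Nodup) (k : ℕ) (hk : k < ℓ.length) (μ : Λ)
    (hμ : ℓ.get ⟨k, hk⟩ = μ) :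
    partialL K μ (bracketL (ℓ.map (FreeAlgebra.ι K))) =
      ((-1 : ℤ) ^ k) •
        ((bracketL ((ℓ.drop (k+1)).map (FreeAlgebra.ι K))
            + if k + 1 = ℓ.length then 1 else 0) * word K (ℓ.take k).reverse) := by
  induction ℓ generalizing k μ with
  | nil => simp at hk
  | cons a t ih =>
    cases k with
    | zero =>
      have ha : a = μ := by simpa using hμ
      subst ha
      cases t with
      | nil =>
        rw [show bracketL ([a].map (FreeAlgebra.ι K)) = FreeAlgebra.ι K a from rfl,
          ← word_singleton, partialL_word]
        simp [word_nil, bracketL]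
      | cons b s =>
        have hrfl : bracketL ((a :: b :: s).map (FreeAlgebra.ι K))
            = ⁅FreeAlgebra.ι K a, bracketL ((b :: s).map (FreeAlgebra.ι K))⁆ := rfl
        have hnm : a ∉ (b :: s) := (List.nodup_cons.mp hnd).1
        rw [hrfl, Ring.lie_def, map_sub, partialL_ι_mul, partialL_mul_ι,
          partialL_not_mem K a _ hnm, eps_bracketL K _ (by simp)]
        have hlen : ¬ (0 + 1 = (a :: b :: s).length) := by simp
        simp [word_nil, hlen]
    | succ j =>
      cases t with
      | nil => simp at hk
      | cons b s =>
        have hkt : j < (b :: s).length := by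
          simpa [Nat.succ_lt_succ_iff] using hk
        have hμ' : (b :: s).get ⟨j, hkt⟩ = μ := by simpa using hμ
        have hmem : μ ∈ (b :: s) := hμ' ▸ List.get_mem _ _
        have hne : ¬ a = μ := fun hm => (List.nodup_cons.mp hnd).1 (hm ▸ hmem)
        have hrfl : bracketL ((a :: b :: s).map (FreeAlgebra.ι K))
            = ⁅FreeAlgebra.ι K a, bracketL ((b :: s).map (FreeAlgebra.ι K))⁆ := rfl
        rw [hrfl, Ring.lie_def, map_sub, partialL_ι_mul, partialL_mul_ι, if_neg hne,
          eps_bracketL K _ (by simp), zero_smul, add_zero, zero_sub,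
          ih (List.nodup_cons.mp hnd).2 j hkt μ hμ']
        rw [smul_mul_assoc, ← neg_smul,
          show -((-1 : ℤ) ^ j) = (-1 : ℤ) ^ (j + 1) by ring]
        congr 1
        rw [mul_assoc]
        congr 1
        · congr 1
          by_cases hc : j + 1 = (b :: s).length
          · rw [if_pos hc, if_pos (by simp only [List.length_cons] at hc ⊢; omega)]
          · rw [if_neg hc,
              if_neg (fun hh => hc (by simp only [List.length_cons] at hh ⊢; omega))]
        · rw [List.take_succ_cons, List.reverse_cons, word_append, word_singleton]

lemma lie_intsmul (n : ℤ) (x y : FreeAlgebra K Λ) : ⁅x, n • y⁆ = n • ⁅x, y⁆ := by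
  rw [Ring.lie_def, Ring.lie_def, mul_smul_comm, smul_mul_assoc, smul_sub]

lemma DynL_partialL_zero (ℓ : List Λ) (hnd : ℓ.Nodup) (h2 : 2 ≤ ℓ.length) (μ : Λ)
    (hμ : ℓ.get ⟨0, by omega⟩ = μ) :
    DynL K Λ (partialL K μ (bracketL (ℓ.map (FreeAlgebra.ι K)))) =
      (ℓ.length - 1) • bracketL ((ℓ.drop 1).map (FreeAlgebra.ι K)) := by
  rw [partialL_bracketL K ℓ hnd 0 (by omega) μ hμ, if_neg (by omega), pow_zero, one_smul,
    add_zero, List.take_zero, List.reverse_nil, word_nil, mul_one, DSW, List.length_drop]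

lemma DynL_partialL_mid (ℓ : List Λ) (hnd : ℓ.Nodup) (k : ℕ) (hk1 : 1 ≤ k)
    (hk2 : k + 1 < ℓ.length) (μ : Λ) (hμ : ℓ.get ⟨k, by omega⟩ = μ) :
    DynL K Λ (partialL K μ (bracketL (ℓ.map (FreeAlgebra.ι K)))) =
      ⁅bracketR ((ℓ.take k).map (FreeAlgebra.ι K)),
        bracketL ((ℓ.drop (k+1)).map (FreeAlgebra.ι K))⁆ := by
  rw [partialL_bracketL K ℓ hnd k (by omega) μ hμ, if_neg (by omega), add_zero, map_zsmul]
  have hdrop_ne : ℓ.drop (k+1) ≠ [] := by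
    intro h
    have := congrArg List.length h
    simp only [List.length_drop, List.length_nil] at this
    omega
  have htake_ne : (ℓ.take k).reverse ≠ [] := by
    intro h
    have := congrArg List.length h
    simp only [List.length_reverse, List.length_take, List.length_nil] at this
    omega
  have hgood := isGood_bracketL K _ hdrop_ne
  rw [DynL_good_mul K hgood, DynL_word, eps_word_ne K _ htake_ne, zero_smul, add_zero,
    List.map_reverse, bracketL_reverse, List.length_map, List.length_take,
    min_eq_left (by omega), lie_intsmul, smul_smul, ← pow_add,
    (show Odd (k + (k + 1)) from ⟨k, by ring⟩).neg_one_pow, neg_one_smul]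
  exact lie_skew _ _

lemma DynL_partialL_last (ℓ : List Λ) (hnd : ℓ.Nodup) (h2 : 2 ≤ ℓ.length) (k : ℕ)
    (hk : k + 1 = ℓ.length) (μ : Λ) (hμ : ℓ.get ⟨k, by omega⟩ = μ) :
    DynL K Λ (partialL K μ (bracketL (ℓ.map (FreeAlgebra.ι K)))) =
      - bracketR ((ℓ.take k).map (FreeAlgebra.ι K)) := by
  rw [partialL_bracketL K ℓ hnd k (by omega) μ hμ, if_pos hk]
  have hd : ℓ.drop (k+1) = [] := by
    apply List.eq_nil_of_length_eq_zero
    simp only [List.length_drop]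
    omega
  rw [hd, show bracketL (([] : List Λ).map (FreeAlgebra.ι K)) = 0 from rfl, zero_add, one_mul,
    map_zsmul, DynL_word, List.map_reverse, bracketL_reverse, List.length_map,
    List.length_take, min_eq_left (by omega), smul_smul, ← pow_add,
    (show Odd (k + (k + 1)) from ⟨k, by ring⟩).neg_one_pow, neg_one_smul]

lemma tmul_nsmul {A : Type*} [AddCommGroup A] [Module K A] (m : ℕ) (x y : A) :
    x ⊗ₜ[K] (m • y) = m • (x ⊗ₜ[K] y) := by
  induction m with
  | zero => simp
  | succ p ih => rw [succ_nsmul, succ_nsmul, TensorProduct.tmul_add, ih]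

end Burg

open Burg in
/-- (Burgunder splitting of a left-nested Lie monomial.)  For
`M = ⁅X₁, ⁅X₂, …, ⁅X_{n-1}, X_n⁆…⁆⁆` in `A = FreeAlgebra K (Fin n)` one has, in `A ⊗[K] A`,
`∑ₖ Xₖ ⊗ 𝔇^L(∂^L_k M) = (n-1) • (X₁ ⊗ [X₂,…,Xₙ]_L)
  + ∑_{k=2}^{n-1} Xₖ ⊗ ⁅[X₁,…,X_{k-1}]_R, [X_{k+1},…,Xₙ]_L⁆ − Xₙ ⊗ [X₁,…,X_{n-1}]_R`. -/
theorem burgunder_splitting_left_nested (K : Type*) [CommRing K] [Algebra ℚ K]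
    (n : ℕ) (hn : 2 ≤ n) :
    (∑ k : Fin n,
        FreeAlgebra.ι K k ⊗ₜ[K]
          DynL K (Fin n) (partialL K k
            (bracketL (List.ofFn fun i : Fin n => FreeAlgebra.ι K i)))) =
      (n - 1) •
          (FreeAlgebra.ι K (⟨0, by omega⟩ : Fin n) ⊗ₜ[K]
            bracketL ((List.ofFn fun i : Fin n => FreeAlgebra.ι K i).drop 1)) +
        (∑ k ∈ Finset.univ.filter fun k : Fin n => 1 ≤ (k : ℕ) ∧ (k : ℕ) < n - 1,
          FreeAlgebra.ι K k ⊗ₜ[K]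
            ⁅bracketR ((List.ofFn fun i : Fin n => FreeAlgebra.ι K i).take (k : ℕ)),
              bracketL ((List.ofFn fun i : Fin n => FreeAlgebra.ι K i).drop ((k : ℕ) + 1))⁆) -
        FreeAlgebra.ι K (⟨n - 1, by omega⟩ : Fin n) ⊗ₜ[K]
          bracketR ((List.ofFn fun i : Fin n => FreeAlgebra.ι K i).take (n - 1)) := by
  classical
  have hofn : (List.ofFn fun i : Fin n => FreeAlgebra.ι K i)
      = (List.finRange n).map (FreeAlgebra.ι K) := by
    rw [List.ofFn_eq_map]
  rw [hofn]
  set ℓ : List (Fin n) := List.finRange n with hℓ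
  have hlen : ℓ.length = n := List.length_finRange (n := n)
  have hnd : ℓ.Nodup := List.nodup_finRange n
  have hget : ∀ (k : ℕ) (hk : k < ℓ.length), ℓ.get ⟨k, hk⟩ = ⟨k, by omega⟩ := by
    intro k hk
    simp [hℓ, List.get_finRange]
  set k₀ : Fin n := ⟨0, by omega⟩ with hk₀
  set kl : Fin n := ⟨n - 1, by omega⟩ with hkl
  set S := Finset.univ.filter fun k : Fin n => 1 ≤ (k : ℕ) ∧ (k : ℕ) < n - 1 with hS
  have hk0S : k₀ ∉ S := by simp [hS, hk₀]
  have hklS : kl ∉ S := by simp [hS, hkl]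
  have hne : k₀ ≠ kl := by
    intro h
    have := congrArg Fin.val h
    simp [hk₀, hkl] at this
    omega
  have hins : insert k₀ (insert kl S) = (Finset.univ : Finset (Fin n)) := by
    ext k
    simp only [Finset.mem_insert, hS, Finset.mem_filter, Finset.mem_univ, true_and, iff_true]
    have hk := k.isLt
    rcases Nat.lt_or_ge (k : ℕ) 1 with h1 | h1
    · left; apply Fin.ext; simp only [hk₀]; omega
    · rcases Nat.lt_or_ge (k : ℕ) (n - 1) with h2 | h2
      · right; right; exact ⟨h1, h2⟩
      · right; left; apply Fin.ext; simp only [hkl]; omega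
  rw [← hins, Finset.sum_insert (by simp [Finset.mem_insert, hne, hk0S]),
    Finset.sum_insert hklS]
  -- compute the k₀ term
  have e0 : DynL K (Fin n) (partialL K k₀ (bracketL (ℓ.map (FreeAlgebra.ι K))))
      = (n - 1) • bracketL ((ℓ.map (FreeAlgebra.ι K)).drop 1) := by
    rw [← List.map_drop, DynL_partialL_zero K ℓ hnd (by omega) k₀ (hget 0 (by omega)), hlen]
  -- the last term
  have el : DynL K (Fin n) (partialL K kl (bracketL (ℓ.map (FreeAlgebra.ι K))))
      = - bracketR ((ℓ.map (FreeAlgebra.ι K)).take (n - 1)) := by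
    rw [← List.map_take]
    exact DynL_partialL_last K ℓ hnd (by omega) (n - 1) (by omega) kl
      (hget (n - 1) (by omega))
  -- the middle terms
  have em : ∀ k ∈ S,
      FreeAlgebra.ι K k ⊗ₜ[K]
          DynL K (Fin n) (partialL K k (bracketL (ℓ.map (FreeAlgebra.ι K))))
        = FreeAlgebra.ι K k ⊗ₜ[K]
            ⁅bracketR ((ℓ.map (FreeAlgebra.ι K)).take (k : ℕ)),
              bracketL ((ℓ.map (FreeAlgebra.ι K)).drop ((k : ℕ) + 1))⁆ := by
    intro k hk
    rw [hS, Finset.mem_filter] at hk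
    obtain ⟨-, hk1, hk2⟩ := hk
    congr 1
    rw [← List.map_take, ← List.map_drop]
    have hμ : ℓ.get ⟨(k : ℕ), by omega⟩ = k := by
      rw [hget (k : ℕ) (by omega)]
    exact DynL_partialL_mid K ℓ hnd (k : ℕ) hk1 (by omega) k hμ
  rw [e0, el, Finset.sum_congr rfl em, tmul_nsmul, TensorProduct.tmul_neg]
  abel
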